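/- Insertion of overlapped Reads preserves register semantics: if L is a linear order on a set of operations obeying register semantics, and r is a new Read whose value equals the value of a Write w ∈ L, then inserting r immediately after w yields a linear order that still obeys register semantics. -/

import Mathlib

/-- A linear (strict) order on operations obeys register semantics if every
Read returns the value of the latest Write preceding it. -/
def Obeys {α V : Type*} (lt : α → α → Prop) (isW : α → Bool) (val : α → V) : Prop :=
  ∀ r, isW r = false → ∃ w, isW w = true ∧ lt w r ∧ val w = val r ∧
    ∀ w', isW w' = true → lt w' r → ¬ lt w w'

/-- Insert a new element (`none`) immediately after `w`: everything up to and
including `w` precedes it, and it precedes everything after `w`. -/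
def insertAfter {α : Type*} (lt : α → α → Prop) (w : α) :
    Option α → Option α → Prop
  | some a, some b => lt a b
  | some a, none => lt a w ∨ a = w
  | none, some b => lt w b
  | none, none => False

/-- Inserting a Read `r` (modeled as `none : Option α`) with value `vr`
immediately after a Write `w` with the same value preserves register
semantics, and the result is still a strict total order. -/
theorem insert_overlapped_read {α V : Type*} (lt : α → α → Prop)
    (isW : α → Bool) (val : α → V) (w : α) (vr : V)
    (hlt : IsStrictTotalOrder α lt)
    (hobeys : Obeys lt isW val)
    (hw : isW w = true) (hval : val w = vr) :
    IsStrictTotalOrder (Option α) (insertAfter lt w) ∧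
    Obeys (insertAfter lt w)
      (fun o => o.elim false isW) (fun o => o.elim vr val) := by
  have ir := hlt.irrefl
  have tr := hlt.trans
  have tri := hlt.trichotomous
  have tri : ∀ a b, lt a b ∨ a = b ∨ lt b a := fun a b => by
    by_cases h1 : lt a b
    · exact Or.inl h1
    by_cases h2 : lt b a
    · exact Or.inr (Or.inr h2)
    exact Or.inr (Or.inl (tri a b h1 h2))
  constructor
  · refine { irrefl := ?_, trans := ?_, trichotomous := ?_ }
    case refine_1 =>
      suffices H : ∀ a b : Option α, insertAfter lt w a b ∨ a = b ∨ insertAfter lt w b a by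
        intro a b h1 h2
        exact ((H a b).resolve_left h1).resolve_right h2
      rintro (_ | a) (_ | b)
      · exact Or.inr (Or.inl rfl)
      · rcases tri w b with h | rfl | h
        · exact Or.inl h
        · exact Or.inr (Or.inr (Or.inr rfl))
        · exact Or.inr (Or.inr (Or.inl h))
      · rcases tri a w with h | rfl | h
        · exact Or.inl (Or.inl h)
        · exact Or.inl (Or.inr rfl)
        · exact Or.inr (Or.inr h)
      · rcases tri a b with h | rfl | h
        · exact Or.inl h
        · exact Or.inr (Or.inl rfl)
        · exact Or.inr (Or.inr h)
    case refine_2 =>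
      rintro (_ | a) h
      · exact h
      · exact ir a h
    case refine_3 =>
      rintro (_ | a) (_ | b) (_ | c) hab hbc <;>
        simp only [insertAfter] at *
      · rcases hbc with h | rfl
        · exact ir _ (tr _ _ _ hab h)
        · exact ir _ hab
      · exact tr _ _ _ hab hbc
      · rcases hab with h | rfl
        · exact tr _ _ _ h hbc
        · exact hbc
      · rcases hbc with h | rfl
        · exact Or.inl (tr _ _ _ hab h)
        · exact Or.inl hab
      · exact tr _ _ _ hab hbc
  · rintro (_ | r) hr
    · refine ⟨some w, hw, Or.inr rfl, hval, ?_⟩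
      rintro (_ | w') hw' hlt'
      · simp at hw'
      · rcases hlt' with h | rfl
        · exact fun h' => ir _ (tr _ _ _ h' h)
        · exact ir _
    · simp only [Option.elim] at hr
      obtain ⟨w0, hw0, hlt0, hval0, hmax⟩ := hobeys r hr
      refine ⟨some w0, hw0, hlt0, hval0, ?_⟩
      rintro (_ | w') hw' hlt'
      · simp at hw'
      · exact hmax w' hw' hlt'
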